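/- arXiv:2005.13620 — 2 statements merged into one kernel-verified Lean document; each statement's English description precedes it below -/
import Mathlib

section
/- For |q| < 1, the 4-fold sum ∑_{n₁,n₂,n₃,n₄≥0} q^{n₁+n₂+n₃+n₄+n₁n₂+n₂n₃+n₃n₄} / ((q;q)_{n₁}(q;q)_{n₂}(q;q)_{n₃}(q;q)_{n₄}) equals q^{-1}/(q;q)_∞² · ∑_{n≥1} qⁿ/(1-qⁿ). -/
open Finset Filter Topology

/-- The finite q-Pochhammer symbol `(q;q)_n`. -/
noncomputable def qPoch (q : ℂ) (n : ℕ) : ℂ := ∏ i ∈ Finset.range n, (1 - q ^ (i + 1))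

/-- The infinite q-Pochhammer symbol `(q;q)_∞`. -/
noncomputable def qPochInf (q : ℂ) : ℂ := ∏' i : ℕ, (1 - q ^ (i + 1))

/-- The infinite q-Pochhammer symbol `(a;q)_∞ = ∏_{i≥0} (1 - a q^i)`. -/
noncomputable def pochInf (a q : ℂ) : ℂ := ∏' i : ℕ, (1 - a * q ^ i)

lemma weier (f : ℕ → ℝ) (h0 : ∀ i, 0 ≤ f i) (s : Finset ℕ) (h1 : ∀ i ∈ s, f i ≤ 1) :
    1 - ∑ i ∈ s, f i ≤ ∏ i ∈ s, (1 - f i) := by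
  induction s using Finset.cons_induction with
  | empty => simp
  | cons a s ha ih =>
    rw [Finset.prod_cons, Finset.sum_cons]
    have hS : 0 ≤ ∑ i ∈ s, f i := Finset.sum_nonneg fun i _ => h0 i
    have hfa : f a ≤ 1 := h1 a (Finset.mem_cons_self a s)
    have ih' := ih fun i hi => h1 i (Finset.mem_cons_of_mem hi)
    nlinarith [h0 a]

lemma qPoch_lower {q : ℂ} (hq : ‖q‖ < 1) : ∃ c : ℝ, 0 < c ∧ ∀ n, c ≤ ‖qPoch q n‖ := by
  set r := ‖q‖ with hr
  have hr0 : 0 ≤ r := norm_nonneg q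
  have hr1 : r < 1 := hq
  have hpow1 : ∀ i : ℕ, r ^ (i + 1) < 1 := fun i => pow_lt_one₀ hr0 hr1 (Nat.succ_ne_zero i)
  -- choose N
  obtain ⟨N, hN⟩ : ∃ N : ℕ, r ^ N ≤ (1 - r) / 2 := by
    have h := tendsto_pow_atTop_nhds_zero_of_lt_one hr0 hr1
    have := (h.eventually (eventually_le_nhds (by linarith : (0:ℝ) < (1 - r) / 2)))
    exact this.exists
  set P := ∏ i ∈ range N, (1 - r ^ (i + 1)) with hP
  have hPpos : 0 < P := Finset.prod_pos fun i _ => by linarith [hpow1 i]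
  refine ⟨P / 2, by linarith, fun n => ?_⟩
  have key : P / 2 ≤ ∏ i ∈ range n, (1 - r ^ (i + 1)) := by
    rcases le_or_gt n N with h | h
    · have : ∏ i ∈ range N, (1 - r ^ (i+1)) ≤ ∏ i ∈ range n, (1 - r ^ (i+1)) := by
        rw [← Finset.prod_range_mul_prod_Ico _ h]
        have h2 : ∏ i ∈ Finset.Ico n N, (1 - r ^ (i+1)) ≤ 1 :=
          Finset.prod_le_one (fun i _ => by linarith [hpow1 i])
            (fun i _ => by linarith [pow_nonneg hr0 (i+1)])
        have h3 : 0 ≤ ∏ i ∈ range n, (1 - r ^ (i+1)) :=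
          Finset.prod_nonneg fun i _ => by linarith [hpow1 i]
        nlinarith
      linarith
    · rw [← Finset.prod_range_mul_prod_Ico _ h.le]
      have hsum : ∑ i ∈ Finset.Ico N n, r ^ (i + 1) ≤ 1 / 2 := by
        have hle : ∀ i ∈ Finset.Ico N n, r ^ (i + 1) ≤ r ^ N * r ^ (i + 1 - N) := by
          intro i hi
          rw [Finset.mem_Ico] at hi
          rw [← pow_add]
          exact pow_le_pow_of_le_one hr0 hr1.le (by omega)
        calc ∑ i ∈ Finset.Ico N n, r ^ (i + 1)
            ≤ ∑ i ∈ Finset.Ico N n, r ^ N * r ^ (i + 1 - N) :=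
              Finset.sum_le_sum hle
          _ = r ^ N * ∑ i ∈ Finset.Ico N n, r ^ (i + 1 - N) := by
              rw [Finset.mul_sum]
          _ ≤ r ^ N * (1 - r)⁻¹ := by
              apply mul_le_mul_of_nonneg_left _ (pow_nonneg hr0 N)
              calc ∑ i ∈ Finset.Ico N n, r ^ (i + 1 - N)
                  ≤ ∑ i ∈ Finset.Ico N n, r ^ (i - N) := by
                    apply Finset.sum_le_sum
                    intro i hi
                    exact pow_le_pow_of_le_one hr0 hr1.le (by omega)
                _ = ∑ j ∈ range (n - N), r ^ j := by
                    rw [Finset.sum_Ico_eq_sum_range]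
                    exact Finset.sum_congr rfl fun j _ => by congr 1; omega
                _ ≤ ∑' j : ℕ, r ^ j := by
                    apply Summable.sum_le_tsum _ (fun j _ => pow_nonneg hr0 j)
                      (summable_geometric_of_lt_one hr0 hr1)
                _ = (1 - r)⁻¹ := tsum_geometric_of_lt_one hr0 hr1
          _ ≤ (1 - r) / 2 * (1 - r)⁻¹ := by
              apply mul_le_mul_of_nonneg_right hN
              rw [inv_nonneg]; linarith
          _ = 1 / 2 := by
              have h2 : (1:ℝ) - r ≠ 0 := by linarith
              field_simp
      have hw := weier (fun i => r ^ (i + 1)) (fun i => pow_nonneg hr0 _)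
        (Finset.Ico N n) (fun i _ => (hpow1 i).le)
      have : (1:ℝ)/2 ≤ ∏ i ∈ Finset.Ico N n, (1 - r ^ (i + 1)) := by
        linarith
      nlinarith
  calc P / 2 ≤ ∏ i ∈ range n, (1 - r ^ (i + 1)) := key
    _ ≤ ‖qPoch q n‖ := by
        rw [qPoch, norm_prod]
        apply Finset.prod_le_prod (fun i _ => by linarith [hpow1 i])
        intro i _
        calc 1 - r ^ (i+1) = 1 - ‖q ^ (i+1)‖ := by rw [norm_pow]
          _ ≤ ‖(1:ℂ) - q ^ (i+1)‖ := by
              have := norm_sub_norm_le (1:ℂ) (q ^ (i+1))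
              simpa using this

lemma one_sub_qpow_ne_zero {q : ℂ} (hq : ‖q‖ < 1) (n : ℕ) : (1:ℂ) - q ^ (n+1) ≠ 0 := by
  intro h
  rw [sub_eq_zero] at h
  have h2 : ‖q ^ (n+1)‖ < 1 := by
    rw [norm_pow]; exact pow_lt_one₀ (norm_nonneg q) hq (Nat.succ_ne_zero n)
  rw [← h] at h2; simp at h2

lemma qPoch_ne_zero {q : ℂ} (hq : ‖q‖ < 1) (n : ℕ) : qPoch q n ≠ 0 := by
  obtain ⟨c, hc0, hc⟩ := qPoch_lower hq
  intro h
  have := hc n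
  rw [h, norm_zero] at this
  linarith

lemma qPoch_succ (q : ℂ) (n : ℕ) : qPoch q (n+1) = qPoch q n * (1 - q ^ (n+1)) :=
  Finset.prod_range_succ _ n

lemma multipliable_one_sub {g : ℕ → ℂ} (hs : Summable g) (h1 : ∀ i, (1:ℂ) - g i ≠ 0) :
    Multipliable fun i => 1 - g i := by
  have H := hs.clog_one_sub.hasSum.cexp
  have he : (Complex.exp ∘ fun i => Complex.log (1 - g i)) = fun i => 1 - g i :=
    funext fun i => Complex.exp_log (h1 i)
  rw [he] at H
  exact ⟨_, H⟩

lemma euler_summable_norm {q : ℂ} (hq : ‖q‖ < 1) {x : ℂ} (hx : ‖x‖ < 1) :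
    Summable fun n : ℕ => ‖x ^ n / qPoch q n‖ := by
  obtain ⟨c, hc0, hc⟩ := qPoch_lower hq
  have hgeo : Summable fun n : ℕ => c⁻¹ * ‖x‖ ^ n :=
    (summable_geometric_of_lt_one (norm_nonneg x) hx).mul_left _
  refine Summable.of_nonneg_of_le (fun n => norm_nonneg _) (fun n => ?_) hgeo
  rw [norm_div, norm_pow]
  calc ‖x‖ ^ n / ‖qPoch q n‖ ≤ ‖x‖ ^ n / c :=
        div_le_div_of_nonneg_left (pow_nonneg (norm_nonneg x) n) hc0 (hc n)
    _ = c⁻¹ * ‖x‖ ^ n := by rw [div_eq_mul_inv, mul_comm]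

lemma euler_FE {q : ℂ} (hq : ‖q‖ < 1) {x : ℂ} (hx : ‖x‖ < 1) :
    ∑' n : ℕ, (q * x) ^ n / qPoch q n = (1 - x) * ∑' n : ℕ, x ^ n / qPoch q n := by
  have hqx : ‖q * x‖ < 1 := by
    rw [norm_mul]; nlinarith [norm_nonneg q, norm_nonneg x]
  have hs : Summable fun n : ℕ => x ^ n / qPoch q n := (euler_summable_norm hq hx).of_norm
  have hsq : Summable fun n : ℕ => (q*x) ^ n / qPoch q n := (euler_summable_norm hq hqx).of_norm
  have hs1 : Summable fun n : ℕ => x ^ (n+1) / qPoch q (n+1) := (summable_nat_add_iff (f := fun n : ℕ => x ^ n / qPoch q n) 1).2 hs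
  have hs2 : Summable fun n : ℕ => x ^ (n+1) / qPoch q n := by
    apply (hs.mul_left x).congr
    intro n; rw [pow_succ]; ring
  have expand : ∀ n : ℕ, (q*x) ^ (n+1) / qPoch q (n+1)
      = x ^ (n+1) / qPoch q (n+1) - x ^ (n+1) / qPoch q n := by
    intro n
    have h1 : qPoch q n ≠ 0 := qPoch_ne_zero hq n
    have h2 : (1:ℂ) - q ^ (n+1) ≠ 0 := one_sub_qpow_ne_zero hq n
    rw [qPoch_succ]
    field_simp
    ring
  have e0 : ∑' n : ℕ, x ^ n / qPoch q n = 1 + ∑' n : ℕ, x ^ (n+1) / qPoch q (n+1) := by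
    rw [Summable.tsum_eq_zero_add hs]; simp [qPoch]
  have e1 : ∑' n : ℕ, (q*x) ^ n / qPoch q n = 1 + ∑' n : ℕ, (q*x) ^ (n+1) / qPoch q (n+1) := by
    rw [Summable.tsum_eq_zero_add hsq]; simp [qPoch]
  have e2 : ∑' n : ℕ, x ^ (n+1) / qPoch q n = x * ∑' n : ℕ, x ^ n / qPoch q n := by
    rw [← tsum_mul_left]
    exact tsum_congr fun n => by rw [pow_succ]; ring
  rw [e1, tsum_congr expand, Summable.tsum_sub hs1 hs2, e2]
  have e3 : ∑' n : ℕ, x ^ (n+1) / qPoch q (n+1) = (∑' n : ℕ, x ^ n / qPoch q n) - 1 := by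
    rw [e0]; ring
  rw [e3]; ring

lemma euler_partial {q : ℂ} (hq : ‖q‖ < 1) {x : ℂ} (hx : ‖x‖ < 1) (N : ℕ) :
    ∑' n : ℕ, (q ^ N * x) ^ n / qPoch q n
      = (∑' n : ℕ, x ^ n / qPoch q n) * ∏ i ∈ range N, (1 - x * q ^ i) := by
  induction N with
  | zero => simp
  | succ N ih =>
    have hNx : ‖q ^ N * x‖ < 1 := by
      rw [norm_mul, norm_pow]
      nlinarith [pow_le_one₀ (norm_nonneg q) hq.le (n := N), norm_nonneg x,
        pow_nonneg (norm_nonneg q) N]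
    have h : (q ^ (N+1) * x) = q * (q ^ N * x) := by ring
    rw [h, euler_FE hq hNx, ih, prod_range_succ]
    ring

lemma euler_mul {q : ℂ} (hq : ‖q‖ < 1) {x : ℂ} (hx : ‖x‖ < 1) :
    (∑' n : ℕ, x ^ n / qPoch q n) * (∏' i : ℕ, (1 - x * q ^ i)) = 1 := by
  obtain ⟨c, hc0, hc⟩ := qPoch_lower hq
  have hgeo : Summable fun i : ℕ => x * q ^ i :=
    (summable_geometric_of_norm_lt_one hq).mul_left x
  have hxq : ∀ i : ℕ, ‖x * q ^ i‖ < 1 := by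
    intro i
    rw [norm_mul, norm_pow]
    nlinarith [pow_le_one₀ (norm_nonneg q) hq.le (n := i), norm_nonneg x,
      pow_nonneg (norm_nonneg q) i]
  have hne : ∀ i : ℕ, (1:ℂ) - x * q ^ i ≠ 0 := by
    intro i h
    rw [sub_eq_zero] at h
    have := hxq i
    rw [← h] at this; simp at this
  have hmul : Multipliable fun i : ℕ => 1 - x * q ^ i := multipliable_one_sub hgeo hne
  have h1 : Tendsto (fun N => (∑' n : ℕ, x ^ n / qPoch q n) * ∏ i ∈ range N, (1 - x * q ^ i))
      atTop (𝓝 ((∑' n : ℕ, x ^ n / qPoch q n) * ∏' i : ℕ, (1 - x * q ^ i))) :=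
    hmul.hasProd.tendsto_prod_nat.const_mul _
  have key : ∀ N : ℕ, (∑' n : ℕ, x ^ n / qPoch q n) * ∏ i ∈ range N, (1 - x * q ^ i)
      = ∑' n : ℕ, (q ^ N * x) ^ n / qPoch q n := fun N => (euler_partial hq hx N).symm
  have hbound : ∀ y : ℂ, ‖y‖ ≤ 1/2 → ‖(∑' n : ℕ, y ^ n / qPoch q n) - 1‖ ≤ c⁻¹ * 2 * ‖y‖ := by
    intro y hy
    have hy1 : ‖y‖ < 1 := by linarith
    have hsyn := euler_summable_norm hq hy1
    have hsy : Summable fun n : ℕ => y ^ n / qPoch q n := hsyn.of_norm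
    have htail : Summable fun n : ℕ => ‖y ^ (n+1) / qPoch q (n+1)‖ :=
      (summable_nat_add_iff (f := fun n : ℕ => ‖y ^ n / qPoch q n‖) 1).2 hsyn
    have hgeoy : Summable fun n : ℕ => (c⁻¹ * ‖y‖) * ‖y‖ ^ n :=
      (summable_geometric_of_lt_one (norm_nonneg y) hy1).mul_left _
    rw [Summable.tsum_eq_zero_add hsy]
    have h00 : y ^ 0 / qPoch q 0 = 1 := by simp [qPoch]
    rw [h00, add_sub_cancel_left]
    calc ‖∑' n : ℕ, y ^ (n+1) / qPoch q (n+1)‖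
        ≤ ∑' n : ℕ, ‖y ^ (n+1) / qPoch q (n+1)‖ := norm_tsum_le_tsum_norm htail
      _ ≤ ∑' n : ℕ, (c⁻¹ * ‖y‖) * ‖y‖ ^ n := by
          apply Summable.tsum_le_tsum _ htail hgeoy
          intro n
          rw [norm_div, norm_pow]
          calc ‖y‖ ^ (n+1) / ‖qPoch q (n+1)‖ ≤ ‖y‖ ^ (n+1) / c :=
                div_le_div_of_nonneg_left (pow_nonneg (norm_nonneg y) _) hc0 (hc (n+1))
            _ = (c⁻¹ * ‖y‖) * ‖y‖ ^ n := by rw [pow_succ, div_eq_mul_inv]; ring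
      _ = (c⁻¹ * ‖y‖) * (1 - ‖y‖)⁻¹ := by
          rw [tsum_mul_left, tsum_geometric_of_lt_one (norm_nonneg y) hy1]
      _ ≤ c⁻¹ * 2 * ‖y‖ := by
          have h2 : (1 - ‖y‖)⁻¹ ≤ 2 := by
            rw [inv_le_comm₀ (by linarith) (by norm_num)]
            linarith
          have hinv : (0:ℝ) ≤ c⁻¹ := by positivity
          nlinarith [norm_nonneg y, mul_nonneg hinv (norm_nonneg y)]
  have h2 : Tendsto (fun N : ℕ => ∑' n : ℕ, (q ^ N * x) ^ n / qPoch q n) atTop (𝓝 1) := by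
    have hz : Tendsto (fun N : ℕ => (∑' n : ℕ, (q ^ N * x) ^ n / qPoch q n) - 1) atTop (𝓝 0) := by
      apply squeeze_zero_norm' (a := fun N : ℕ => (c⁻¹ * 2) * ‖q‖ ^ N)
      · have hev : ∀ᶠ N : ℕ in atTop, ‖q‖ ^ N ≤ 1/2 := by
          have := tendsto_pow_atTop_nhds_zero_of_lt_one (norm_nonneg q) hq
          exact this.eventually (eventually_le_nhds (by norm_num))
        filter_upwards [hev] with N hN
        have hnorm : ‖q ^ N * x‖ ≤ 1/2 := by
          rw [norm_mul, norm_pow]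
          nlinarith [pow_nonneg (norm_nonneg q) N, norm_nonneg x]
        calc ‖(∑' n : ℕ, (q ^ N * x) ^ n / qPoch q n) - 1‖
            ≤ c⁻¹ * 2 * ‖q ^ N * x‖ := hbound _ hnorm
          _ ≤ (c⁻¹ * 2) * ‖q‖ ^ N := by
              rw [norm_mul, norm_pow]
              have hinv : (0:ℝ) ≤ c⁻¹ * 2 := by positivity
              exact mul_le_mul_of_nonneg_left
                (mul_le_of_le_one_right (pow_nonneg (norm_nonneg q) N) hx.le) hinv
      · simpa using (tendsto_pow_atTop_nhds_zero_of_lt_one (norm_nonneg q) hq).const_mul (c⁻¹ * 2)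
    have := hz.add_const 1
    simpa using this
  exact tendsto_nhds_unique (h1.congr key) h2

lemma qpow_norm_lt {q : ℂ} (hq : ‖q‖ < 1) (k : ℕ) : ‖q ^ (k+1)‖ < 1 := by
  rw [norm_pow]; exact pow_lt_one₀ (norm_nonneg q) hq (Nat.succ_ne_zero k)

lemma tail_facts {q : ℂ} (hq : ‖q‖ < 1) (k : ℕ) :
    qPoch q k * ∏' i : ℕ, (1 - q ^ (i+k+1)) = qPochInf q ∧
    (∑' n : ℕ, (q ^ (k+1)) ^ n / qPoch q n) * ∏' i : ℕ, (1 - q ^ (i+k+1)) = 1 := by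
  have hmulk : Multipliable fun i : ℕ => (1:ℂ) - q ^ (i+k+1) := by
    apply multipliable_one_sub
    · apply Summable.congr ((summable_geometric_of_norm_lt_one hq).mul_left (q ^ (k+1)))
      intro i
      rw [← pow_add]
      congr 1
      omega
    · intro i
      have : (i + k) + 1 = (i+k) + 1 := rfl
      exact one_sub_qpow_ne_zero hq (i+k)
  constructor
  · exact Multipliable.prod_mul_tprod_nat_mul' (f := fun i => 1 - q ^ (i+1)) (k := k) hmulk
  · have he := euler_mul hq (qpow_norm_lt hq k)
    have hpe : ∏' i : ℕ, ((1:ℂ) - q ^ (k+1) * q ^ i) = ∏' i : ℕ, (1 - q ^ (i+k+1)) := by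
      apply tprod_congr
      intro i
      rw [← pow_add]
      congr 2
      omega
    rwa [hpe] at he

lemma qPochInf_ne_zero {q : ℂ} (hq : ‖q‖ < 1) : qPochInf q ≠ 0 := by
  obtain ⟨h1, h2⟩ := tail_facts hq 0
  intro h
  rw [h] at h1
  have : ∏' i : ℕ, ((1:ℂ) - q ^ (i+0+1)) = 0 := by
    have hp0 : qPoch q 0 = 1 := by simp [qPoch]
    rw [hp0, one_mul] at h1
    exact h1
  rw [this, mul_zero] at h2
  exact zero_ne_one h2

lemma euler_value {q : ℂ} (hq : ‖q‖ < 1) (k : ℕ) :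
    ∑' n : ℕ, (q ^ (k+1)) ^ n / qPoch q n = qPoch q k / qPochInf q := by
  obtain ⟨h1, h2⟩ := tail_facts hq k
  rw [← h1, div_mul_cancel_left₀ (qPoch_ne_zero hq k)]
  exact eq_inv_of_mul_eq_one_left h2

def e4 : (ℕ × ℕ × ℕ × ℕ) ≃ (Fin 4 → ℕ) where
  toFun := fun p => ![p.2.2.1, p.1, p.2.1, p.2.2.2]
  invFun := fun n => (n 1, n 2, n 0, n 3)
  left_inv := fun p => rfl
  right_inv := fun n => by
    funext i
    fin_cases i <;> rfl


set_option maxHeartbeats 2000000 in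
theorem stmt9 (q : ℂ) (hq : ‖q‖ < 1) (hq0 : q ≠ 0) :
    ∑' n : Fin 4 → ℕ,
        q ^ (n 0 + n 1 + n 2 + n 3 + n 0 * n 1 + n 1 * n 2 + n 2 * n 3)
          / (qPoch q (n 0) * qPoch q (n 1) * qPoch q (n 2) * qPoch q (n 3))
      = q⁻¹ / qPochInf q ^ 2 * ∑' n : ℕ, q ^ (n + 1) / (1 - q ^ (n + 1)) := by
  obtain ⟨c, hc0, hc⟩ := qPoch_lower hq
  have hr0 : (0:ℝ) ≤ ‖q‖ := norm_nonneg q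
  set t : ℕ × ℕ × ℕ × ℕ → ℂ := fun p =>
    q ^ (p.2.2.1 + p.1 + p.2.1 + p.2.2.2 + p.2.2.1 * p.1 + p.1 * p.2.1 + p.2.1 * p.2.2.2) /
      (qPoch q p.2.2.1 * qPoch q p.1 * qPoch q p.2.1 * qPoch q p.2.2.2) with ht
  -- summability of t
  have hgeoR : Summable fun n : ℕ => ‖q‖ ^ n := summable_geometric_of_lt_one hr0 hq
  have hnn : ∀ n : ℕ, (0:ℝ) ≤ ‖q‖ ^ n := fun n => pow_nonneg hr0 n
  have s2 : Summable fun z : ℕ × ℕ => ‖q‖ ^ z.1 * ‖q‖ ^ z.2 :=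
    hgeoR.mul_of_nonneg hgeoR hnn hnn
  have s3 : Summable fun z : ℕ × ℕ × ℕ => ‖q‖ ^ z.1 * (‖q‖ ^ z.2.1 * ‖q‖ ^ z.2.2) :=
    hgeoR.mul_of_nonneg s2 hnn fun z => mul_nonneg (hnn _) (hnn _)
  have s4 : Summable fun z : ℕ × ℕ × ℕ × ℕ =>
      ‖q‖ ^ z.1 * (‖q‖ ^ z.2.1 * (‖q‖ ^ z.2.2.1 * ‖q‖ ^ z.2.2.2)) :=
    hgeoR.mul_of_nonneg s3 hnn fun z => mul_nonneg (hnn _) (mul_nonneg (hnn _) (hnn _))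
  have hmaj : Summable fun p : ℕ × ℕ × ℕ × ℕ =>
      c⁻¹ ^ 4 * ‖q‖ ^ (p.1 + p.2.1 + p.2.2.1 + p.2.2.2) := by
    apply Summable.mul_left
    apply s4.congr
    intro p
    rw [← pow_add, ← pow_add, ← pow_add]
    congr 1
    ring
  have hsum4 : Summable t := by
    apply Summable.of_norm_bounded hmaj
    rintro ⟨a, b, cc, d⟩
    have hSE : a + b + cc + d ≤ cc + a + b + d + cc * a + a * b + b * d := by nlinarith
    have hden : ((c * c) * c) * c
        ≤ ((‖qPoch q cc‖ * ‖qPoch q a‖) * ‖qPoch q b‖) * ‖qPoch q d‖ := by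
      have m1 : c * c ≤ ‖qPoch q cc‖ * ‖qPoch q a‖ :=
        mul_le_mul (hc cc) (hc a) hc0.le (norm_nonneg _)
      have m2 : (c * c) * c ≤ (‖qPoch q cc‖ * ‖qPoch q a‖) * ‖qPoch q b‖ :=
        mul_le_mul m1 (hc b) hc0.le (by positivity)
      exact mul_le_mul m2 (hc d) hc0.le (by positivity)
    calc ‖t (a, b, cc, d)‖
        = ‖q‖ ^ (cc + a + b + d + cc * a + a * b + b * d) /
            (((‖qPoch q cc‖ * ‖qPoch q a‖) * ‖qPoch q b‖) * ‖qPoch q d‖) := by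
          simp only [ht]
          rw [norm_div, norm_pow, norm_mul, norm_mul, norm_mul]
      _ ≤ ‖q‖ ^ (a + b + cc + d) / (((c * c) * c) * c) :=
          div_le_div₀ (hnn _) (pow_le_pow_of_le_one hr0 hq.le hSE) (by positivity) hden
      _ = c⁻¹ ^ 4 * ‖q‖ ^ (a + b + cc + d) := by
          have h4 : ((c * c) * c) * c = c ^ 4 := by ring
          rw [h4, div_eq_mul_inv, ← inv_pow, mul_comm]
  -- the inner double sum
  have inner : ∀ a b : ℕ, (∑' w : ℕ × ℕ, t (a, b, w.1, w.2))
      = q ^ (a + b + a * b) / qPochInf q ^ 2 := by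
    intro a b
    have hga := euler_summable_norm hq (qpow_norm_lt hq a)
    have hgb := euler_summable_norm hq (qpow_norm_lt hq b)
    have hfact : ∀ w : ℕ × ℕ, t (a, b, w.1, w.2)
        = (q ^ (a + b + a * b) / (qPoch q a * qPoch q b)) *
          (((q ^ (a+1)) ^ w.1 / qPoch q w.1) * ((q ^ (b+1)) ^ w.2 / qPoch q w.2)) := by
      rintro ⟨cc, d⟩
      simp only [ht]
      have hE : q ^ (cc + a + b + d + cc * a + a * b + b * d)
          = q ^ (a + b + a * b) * ((q ^ (a+1)) ^ cc * (q ^ (b+1)) ^ d) := by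
        rw [← pow_mul, ← pow_mul, ← pow_add, ← pow_add]
        congr 1
        ring
      rw [hE]
      ring
    calc (∑' w : ℕ × ℕ, t (a, b, w.1, w.2))
        = (q ^ (a + b + a * b) / (qPoch q a * qPoch q b)) *
            ∑' w : ℕ × ℕ, ((q ^ (a+1)) ^ w.1 / qPoch q w.1) * ((q ^ (b+1)) ^ w.2 / qPoch q w.2) := by
          rw [tsum_congr hfact, tsum_mul_left]
      _ = (q ^ (a + b + a * b) / (qPoch q a * qPoch q b)) *
            ((∑' n : ℕ, (q ^ (a+1)) ^ n / qPoch q n) * (∑' n : ℕ, (q ^ (b+1)) ^ n / qPoch q n)) := by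
          rw [tsum_mul_tsum_of_summable_norm hga hgb]
      _ = (q ^ (a + b + a * b) / (qPoch q a * qPoch q b)) *
            ((qPoch q a / qPochInf q) * (qPoch q b / qPochInf q)) := by
          rw [euler_value hq a, euler_value hq b]
      _ = q ^ (a + b + a * b) / qPochInf q ^ 2 := by
          have h1 := qPoch_ne_zero hq a
          have h2 := qPoch_ne_zero hq b
          have h3 := qPochInf_ne_zero hq
          field_simp
  have hgeoq : ∀ a : ℕ, (∑' n : ℕ, (q ^ (a+1)) ^ n) = (1 - q ^ (a+1))⁻¹ := fun a =>
    tsum_geometric_of_norm_lt_one (qpow_norm_lt hq a)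
  calc (∑' n : Fin 4 → ℕ,
        q ^ (n 0 + n 1 + n 2 + n 3 + n 0 * n 1 + n 1 * n 2 + n 2 * n 3)
          / (qPoch q (n 0) * qPoch q (n 1) * qPoch q (n 2) * qPoch q (n 3)))
      = ∑' p : ℕ × ℕ × ℕ × ℕ, t p := by
        rw [← Equiv.tsum_eq e4]
        apply tsum_congr
        rintro ⟨a, b, cc, d⟩
        rfl
    _ = ∑' (a : ℕ), ∑' (z : ℕ × ℕ × ℕ), t (a, z) := Summable.tsum_prod hsum4
    _ = ∑' (a : ℕ) (b : ℕ), ∑' (w : ℕ × ℕ), t (a, b, w.1, w.2) := by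
        refine tsum_congr fun a => ?_
        rw [Summable.tsum_prod (hsum4.prod_factor a)]
    _ = ∑' (a : ℕ) (b : ℕ), q ^ (a + b + a * b) / qPochInf q ^ 2 :=
        tsum_congr fun a => tsum_congr fun b => inner a b
    _ = ∑' (a : ℕ), (q ^ a / qPochInf q ^ 2) * (1 - q ^ (a+1))⁻¹ := by
        refine tsum_congr fun a => ?_
        have : ∀ b : ℕ, q ^ (a + b + a * b) / qPochInf q ^ 2
            = (q ^ a / qPochInf q ^ 2) * (q ^ (a+1)) ^ b := by
          intro b
          have hE : q ^ (a + b + a * b) = q ^ a * (q ^ (a+1)) ^ b := by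
            rw [← pow_mul, ← pow_add]
            congr 1
            ring
          rw [hE]
          ring
        rw [tsum_congr this, tsum_mul_left, hgeoq a]
    _ = q⁻¹ / qPochInf q ^ 2 * ∑' n : ℕ, q ^ (n + 1) / (1 - q ^ (n + 1)) := by
        rw [← tsum_mul_left]
        refine tsum_congr fun a => ?_
        have hccc : q⁻¹ * q ^ (a+1) = q ^ a := by
          rw [pow_succ, mul_comm (q ^ a) q, ← mul_assoc, inv_mul_cancel₀ hq0, one_mul]
        rw [← hccc]
        ring
end

section
/- For |q| < 1, one has ∑_{n≥1,m≥1} q^{nm}/((q;q)_n (q;q)_m) = 1/(q;q)_∞ · ∑_{n≥1} qⁿ/(1-qⁿ) + ∑_{n≥1} ( 1/(q;q)_∞ − 1/(q;q)_n ). -/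
open Finset Filter

lemma qPoch_lb (q : ℂ) (hq : ‖q‖ < 1) : ∃ c : ℝ, 0 < c ∧ ∀ m, c ≤ ‖qPoch q m‖ := by
  set r := ‖q‖ with hr
  have r0 : 0 ≤ r := norm_nonneg q
  have hri : ∀ i : ℕ, r ^ (i+1) < 1 := fun i =>
    lt_of_le_of_lt (pow_le_pow_of_le_one r0 hq.le (Nat.one_le_iff_ne_zero.2 (Nat.succ_ne_zero i)))
      (by simpa using hq)
  have hpos : ∀ i : ℕ, (0:ℝ) < 1 - r ^ (i+1) := fun i => by linarith [hri i]
  have hsum : Summable (fun i : ℕ => -Real.log (1 - r ^ (i+1))) := by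
    apply Summable.of_nonneg_of_le (fun i => ?_) (fun i => ?_)
      (((summable_geometric_of_lt_one r0 hq).mul_left (r / (1-r))))
    · simpa using Real.log_nonpos (hpos i).le (by nlinarith [pow_nonneg r0 (i+1)])
    · have h1 : -Real.log (1 - r^(i+1)) = Real.log (1 - r^(i+1))⁻¹ := by
        rw [Real.log_inv]
      rw [h1]
      have := Real.log_le_sub_one_of_pos (x := (1 - r^(i+1))⁻¹) (inv_pos.2 (hpos i))
      have hne := (hpos i).ne'
      have h2 : (1 - r^(i+1))⁻¹ - 1 = r^(i+1) / (1 - r^(i+1)) := by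
        field_simp
        ring
      have h3 : r^(i+1) / (1 - r^(i+1)) ≤ r^(i+1) / (1 - r) := by
        apply div_le_div_of_nonneg_left (by positivity) (by linarith) ?_
        have : r ^ (i+1) ≤ r := pow_le_of_le_one r0 hq.le (Nat.succ_ne_zero i)
        linarith
      calc Real.log (1 - r^(i+1))⁻¹ ≤ (1 - r^(i+1))⁻¹ - 1 := this
        _ = r^(i+1) / (1 - r^(i+1)) := h2
        _ ≤ r^(i+1) / (1 - r) := h3
        _ = r / (1-r) * r ^ i := by rw [pow_succ]; ring
  refine ⟨Real.exp (-(∑' i, -Real.log (1 - r ^ (i+1)))), Real.exp_pos _, fun m => ?_⟩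
  have key : ∀ m, Real.exp (-(∑' i, -Real.log (1 - r ^ (i+1)))) ≤ ∏ i ∈ range m, (1 - r ^ (i+1)) := by
    intro m
    have : ∏ i ∈ range m, (1 - r ^ (i+1)) = Real.exp (∑ i ∈ range m, Real.log (1 - r^(i+1))) := by
      rw [Real.exp_sum]
      exact (Finset.prod_congr rfl (fun i _ => (Real.exp_log (hpos i)).symm))
    rw [this, Real.exp_le_exp]
    have := Summable.sum_le_tsum (range m) (fun i _ => (neg_nonneg.2 (Real.log_nonpos (hpos i).le (by nlinarith [pow_nonneg r0 (i+1)])))) hsum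
    have e : ∑ i ∈ range m, Real.log (1 - r^(i+1)) = -∑ i ∈ range m, (-Real.log (1 - r^(i+1))) := by
      simp
    rw [e]
    linarith
  refine le_trans (key m) ?_
  rw [qPoch, norm_prod]
  apply Finset.prod_le_prod (fun i _ => (hpos i).le) (fun i _ => ?_)
  calc 1 - r^(i+1) = ‖(1:ℂ)‖ - ‖q^(i+1)‖ := by simp [hr]
    _ ≤ ‖1 - q^(i+1)‖ := norm_sub_norm_le _ _


noncomputable def eulerF (q z : ℂ) : ℂ := ∑' m : ℕ, z ^ m / qPoch q m

lemma one_sub_ne {w : ℂ} (hw : ‖w‖ < 1) : 1 - w ≠ 0 := by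
  have : w ≠ 1 := by intro h; rw [h] at hw; simp at hw
  exact sub_ne_zero.2 (Ne.symm this)

lemma norm_pow_succ_lt {q : ℂ} (hq : ‖q‖ < 1) (m : ℕ) : ‖q ^ (m+1)‖ < 1 := by
  rw [norm_pow]
  exact pow_lt_one₀ (norm_nonneg q) hq (Nat.succ_ne_zero m)

lemma qPoch_ne {q : ℂ} (hq : ‖q‖ < 1) (m : ℕ) : qPoch q m ≠ 0 := by
  obtain ⟨c, hc, h⟩ := qPoch_lb q hq
  intro h0
  have := h m
  rw [h0] at this
  simp only [norm_zero] at this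
  linarith

lemma eulerF_summable {q : ℂ} (hq : ‖q‖ < 1) {z : ℂ} (hz : ‖z‖ < 1) :
    Summable (fun m : ℕ => z ^ m / qPoch q m) := by
  obtain ⟨c, hc, h⟩ := qPoch_lb q hq
  apply Summable.of_norm_bounded (g := fun m => c⁻¹ * ‖z‖ ^ m)
    ((summable_geometric_of_lt_one (norm_nonneg z) hz).mul_left _)
  intro m
  rw [norm_div, norm_pow, div_eq_mul_inv, mul_comm]
  exact mul_le_mul_of_nonneg_right (inv_anti₀ hc (h m)) (pow_nonneg (norm_nonneg z) m)

lemma eulerF_funceq {q : ℂ} (hq : ‖q‖ < 1) {z : ℂ} (hz : ‖z‖ < 1) :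
    eulerF q (q * z) = (1 - z) * eulerF q z := by
  have hqz : ‖q * z‖ < 1 := by
    rw [norm_mul]
    nlinarith [norm_nonneg z, norm_nonneg q]
  have s1 := eulerF_summable hq hz
  have s2 := eulerF_summable hq hqz
  have key : eulerF q z - eulerF q (q * z) = z * eulerF q z := by
    simp only [eulerF]
    rw [← Summable.tsum_sub s1 s2]
    have e : ∀ m : ℕ, z ^ m / qPoch q m - (q*z) ^ m / qPoch q m
        = (fun m : ℕ => z ^ m * (1 - q ^ m) / qPoch q m) m := by
      intro m; rw [mul_pow]; ring
    rw [tsum_congr e, Summable.tsum_eq_zero_add ((s1.sub s2).congr (fun m => e m))]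
    simp only [pow_zero, sub_self, mul_zero, zero_div, zero_add]
    rw [← tsum_mul_left]
    apply tsum_congr
    intro m
    have hp : qPoch q (m+1) = qPoch q m * (1 - q ^ (m+1)) := by
      rw [qPoch, qPoch, Finset.prod_range_succ]
    rw [hp]
    have h1 : (1 : ℂ) - q ^ (m+1) ≠ 0 := one_sub_ne (norm_pow_succ_lt hq m)
    field_simp [qPoch_ne hq m]
    ring
  linear_combination -key



lemma eulerF_iter {q : ℂ} (hq : ‖q‖ < 1) {z : ℂ} (hz : ‖z‖ < 1) (N : ℕ) :
    eulerF q (z * q ^ N) = eulerF q z * ∏ i ∈ range N, (1 - z * q ^ i) := by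
  induction N with
  | zero => simp
  | succ N ih =>
    have hzq : ‖z * q ^ N‖ < 1 := by
      rw [norm_mul, norm_pow]
      calc ‖z‖ * ‖q‖ ^ N ≤ ‖z‖ * 1 := by
            apply mul_le_mul_of_nonneg_left (pow_le_one₀ (norm_nonneg q) hq.le) (norm_nonneg z)
        _ < 1 := by simpa using hz
    have e : z * q ^ (N+1) = q * (z * q ^ N) := by ring
    rw [e, eulerF_funceq hq hzq, ih, Finset.prod_range_succ]
    ring

lemma multipliable_pochInf {q : ℂ} (hq : ‖q‖ < 1) {z : ℂ} (hz : ‖z‖ < 1) :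
    Multipliable (fun i : ℕ => 1 - z * q ^ i) := by
  have hne : ∀ i : ℕ, (1 : ℂ) - z * q ^ i ≠ 0 := by
    intro i
    apply one_sub_ne
    rw [norm_mul, norm_pow]
    calc ‖z‖ * ‖q‖ ^ i ≤ ‖z‖ * 1 := by
          apply mul_le_mul_of_nonneg_left (pow_le_one₀ (norm_nonneg q) hq.le) (norm_nonneg z)
      _ < 1 := by simpa using hz
  have hlog : Summable (fun i : ℕ => Complex.log (1 - z * q ^ i)) := by
    set C : ℝ := ‖z‖ / (2 * (1 - ‖z‖)) + 1 with hC
    apply Summable.of_norm_bounded (g := fun i => C * (‖z‖ * ‖q‖ ^ i))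
      (((summable_geometric_of_lt_one (norm_nonneg q) hq).mul_left ‖z‖).mul_left C)
    intro i
    have hw : ‖-(z * q ^ i)‖ ≤ ‖z‖ * ‖q‖ ^ i := by
      rw [norm_neg, norm_mul, norm_pow]
    have hw2 : ‖z‖ * ‖q‖ ^ i ≤ ‖z‖ := by
      calc ‖z‖ * ‖q‖ ^ i ≤ ‖z‖ * 1 := by
            apply mul_le_mul_of_nonneg_left (pow_le_one₀ (norm_nonneg q) hq.le) (norm_nonneg z)
        _ = ‖z‖ := by ring
    have hw1 : ‖-(z * q ^ i)‖ < 1 := lt_of_le_of_lt (le_trans hw hw2) hz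
    have e : (1 : ℂ) - z * q ^ i = 1 + -(z * q ^ i) := by ring
    rw [e]
    set t := ‖z‖ * ‖q‖ ^ i with ht
    have htw : ‖-(z * q ^ i)‖ = t := by rw [norm_neg, norm_mul, norm_pow]
    have ht0 : 0 ≤ t := by positivity
    have htz : t ≤ ‖z‖ := hw2
    have ht1 : t < 1 := by rw [← htw]; exact hw1
    have hinv : (1 - t)⁻¹ ≤ (1 - ‖z‖)⁻¹ := by
      apply inv_anti₀ (by linarith) (by linarith)
    calc ‖Complex.log (1 + -(z * q ^ i))‖
        ≤ ‖-(z * q^i)‖ ^ 2 * (1 - ‖-(z * q^i)‖)⁻¹ / 2 + ‖-(z * q^i)‖ :=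
          Complex.norm_log_one_add_le hw1
      _ = t ^ 2 * (1 - t)⁻¹ / 2 + t := by rw [htw]
      _ ≤ t * (‖z‖ * (1 - ‖z‖)⁻¹) / 2 + t := by
          have h2 : t ^ 2 * (1 - t)⁻¹ ≤ t * (‖z‖ * (1 - ‖z‖)⁻¹) := by
            rw [pow_two]
            calc t * t * (1 - t)⁻¹ ≤ t * ‖z‖ * (1 - ‖z‖)⁻¹ := by
                  apply mul_le_mul (mul_le_mul_of_nonneg_left htz ht0) hinv
                    (inv_nonneg.2 (by linarith)) (by positivity)
              _ = t * (‖z‖ * (1 - ‖z‖)⁻¹) := by ring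
          linarith
      _ = (‖z‖ / (2 * (1 - ‖z‖)) + 1) * t := by
          have hzne : (1:ℝ) - ‖z‖ ≠ 0 := by linarith
          field_simp
      _ = C * (‖z‖ * ‖q‖ ^ i) := by rw [hC, ht]
  exact Complex.multipliable_of_summable_log hlog

lemma eulerF_zero (q : ℂ) : eulerF q 0 = 1 := by
  rw [eulerF]
  rw [tsum_eq_single 0]
  · simp [qPoch]
  · intro m hm
    rw [zero_pow hm, zero_div]

lemma eulerF_mul_pochInf {q : ℂ} (hq : ‖q‖ < 1) {z : ℂ} (hz : ‖z‖ < 1) :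
    eulerF q z * pochInf z q = 1 := by
  obtain ⟨c, hc, hcb⟩ := qPoch_lb q hq
  have hA : Tendsto (fun N => eulerF q z * ∏ i ∈ range N, (1 - z * q ^ i)) atTop
      (nhds (eulerF q z * pochInf z q)) :=
    (HasProd.tendsto_prod_nat (multipliable_pochInf hq hz).hasProd).const_mul _
  have hB : Tendsto (fun N => eulerF q (z * q ^ N)) atTop (nhds 1) := by
    have hbound : ∀ N : ℕ, ‖z * q ^ N‖ ≤ 1/2 → ‖eulerF q (z * q ^ N) - 1‖ ≤ (2 / c) * (‖z‖ * ‖q‖ ^ N) := by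
      intro N hN
      set w := z * q ^ N with hw
      have hw1 : ‖w‖ < 1 := lt_of_le_of_lt hN (by norm_num)
      have hsum := eulerF_summable hq hw1
      have e : eulerF q w = 1 + ∑' m : ℕ, w ^ (m+1) / qPoch q (m+1) := by
        rw [eulerF, Summable.tsum_eq_zero_add hsum]
        simp [qPoch]
      rw [e]
      simp only [add_sub_cancel_left]
      have hb : ∀ m : ℕ, ‖w ^ (m+1) / qPoch q (m+1)‖ ≤ c⁻¹ * (‖w‖ * (1/2) ^ m) := by
        intro m
        rw [norm_div, norm_pow, div_eq_mul_inv, mul_comm]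
        have h1 : ‖w‖ ^ (m+1) ≤ ‖w‖ * (1/2) ^ m := by
          rw [pow_succ']
          apply mul_le_mul_of_nonneg_left _ (norm_nonneg w)
          exact pow_le_pow_left₀ (norm_nonneg w) hN m
        exact mul_le_mul (inv_anti₀ hc (hcb (m+1))) h1 (by positivity) (by positivity)
      have hs2 : Summable (fun m : ℕ => c⁻¹ * (‖w‖ * (1/2) ^ m)) :=
        ((summable_geometric_of_lt_one (by norm_num) (by norm_num)).mul_left _).mul_left _
      have hs1 : Summable (fun m : ℕ => ‖w ^ (m+1) / qPoch q (m+1)‖) :=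
        Summable.of_nonneg_of_le (fun m => norm_nonneg _) hb hs2
      calc ‖∑' m : ℕ, w ^ (m+1) / qPoch q (m+1)‖
          ≤ ∑' m : ℕ, ‖w ^ (m+1) / qPoch q (m+1)‖ := norm_tsum_le_tsum_norm hs1
        _ ≤ ∑' m : ℕ, (c⁻¹ * (‖w‖ * (1/2) ^ m)) := Summable.tsum_le_tsum hb hs1 hs2
        _ = c⁻¹ * (‖w‖ * (1 - 1/2)⁻¹) := by
            rw [tsum_mul_left, tsum_mul_left, tsum_geometric_of_lt_one (by norm_num) (by norm_num)]
        _ = (2 / c) * (‖z‖ * ‖q‖ ^ N) := by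
            rw [hw, norm_mul, norm_pow]
            field_simp
            ring
    have hg : Tendsto (fun N : ℕ => (2 / c) * (‖z‖ * ‖q‖ ^ N)) atTop (nhds 0) := by
      have h1 : Tendsto (fun N : ℕ => ‖q‖ ^ N) atTop (nhds 0) :=
        tendsto_pow_atTop_nhds_zero_of_lt_one (norm_nonneg q) hq
      have := (h1.const_mul ‖z‖).const_mul (2 / c)
      simpa using this
    have hev : ∀ᶠ N : ℕ in atTop, ‖eulerF q (z * q ^ N) - 1‖ ≤ (2 / c) * (‖z‖ * ‖q‖ ^ N) := by
      have h1 : Tendsto (fun N : ℕ => ‖z * q ^ N‖) atTop (nhds 0) := by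
        have h2 : Tendsto (fun N : ℕ => ‖q‖ ^ N) atTop (nhds 0) :=
          tendsto_pow_atTop_nhds_zero_of_lt_one (norm_nonneg q) hq
        have := h2.const_mul ‖z‖
        simp only [mul_zero] at this
        apply this.congr
        intro N
        rw [norm_mul, norm_pow]
      have h3 : ∀ᶠ N : ℕ in atTop, ‖z * q ^ N‖ < 1/2 :=
        h1.eventually (gt_mem_nhds (by norm_num))
      exact h3.mono (fun N hN => hbound N hN.le)
    have h0 : Tendsto (fun N : ℕ => eulerF q (z * q ^ N) - 1) atTop (nhds 0) :=
      squeeze_zero_norm' hev hg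
    have := h0.add_const 1
    simpa using this
  have heq : ∀ N, eulerF q (z * q ^ N) = eulerF q z * ∏ i ∈ range N, (1 - z * q ^ i) :=
    eulerF_iter hq hz
  have := hA.congr (fun N => (heq N).symm)
  exact tendsto_nhds_unique this hB


section main
variable {q : ℂ}

lemma multipliable_qPochInf (hq : ‖q‖ < 1) : Multipliable (fun i : ℕ => 1 - q ^ (i+1)) :=
  (multipliable_pochInf hq hq).congr (fun i => by rw [← pow_succ'])

lemma qPochInf_eq_pochInf (hq : ‖q‖ < 1) : qPochInf q = pochInf q q := by
  rw [qPochInf, pochInf]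
  exact tprod_congr (fun i => by rw [← pow_succ'])

lemma pochInf_ne (hq : ‖q‖ < 1) {z : ℂ} (hz : ‖z‖ < 1) : pochInf z q ≠ 0 :=
  right_ne_zero_of_mul_eq_one (eulerF_mul_pochInf hq hz)

lemma qPochInf_ne (hq : ‖q‖ < 1) : qPochInf q ≠ 0 := by
  rw [qPochInf_eq_pochInf hq]; exact pochInf_ne hq hq

lemma qPochInf_split (hq : ‖q‖ < 1) (n : ℕ) :
    qPochInf q = qPoch q n * pochInf (q ^ (n+1)) q := by
  have hmt : Multipliable (fun i : ℕ => 1 - q ^ ((n + i) + 1)) := by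
    apply (multipliable_pochInf hq (norm_pow_succ_lt hq n)).congr
    intro i
    congr 1
    rw [← pow_add]
    congr 1
    omega
  have hTeq : (∏' i : ℕ, (1 - q ^ ((n + i) + 1))) = pochInf (q ^ (n+1)) q := by
    rw [pochInf]
    apply tprod_congr
    intro i
    congr 1
    rw [← pow_add]
    congr 1
    omega
  have h1 : Tendsto (fun N : ℕ => ∏ i ∈ range N, (1 - q ^ (i+1))) atTop (nhds (qPochInf q)) := by
    rw [qPochInf]
    exact HasProd.tendsto_prod_nat (multipliable_qPochInf hq).hasProd
  have h2 : Tendsto (fun N : ℕ => ∏ i ∈ range (n + N), (1 - q ^ (i+1))) atTop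
      (nhds (qPochInf q)) := by
    apply h1.comp
    exact Filter.Tendsto.nonneg_add_atTop (fun _ => Nat.zero_le n) tendsto_id
  have h3 : Tendsto (fun N : ℕ => qPoch q n * ∏ i ∈ range N, (1 - q ^ ((n + i) + 1))) atTop
      (nhds (qPoch q n * pochInf (q ^ (n+1)) q)) := by
    rw [← hTeq]
    exact (HasProd.tendsto_prod_nat hmt.hasProd).const_mul _
  have h4 : ∀ N : ℕ, ∏ i ∈ range (n + N), (1 - q ^ (i+1))
      = qPoch q n * ∏ i ∈ range N, (1 - q ^ ((n + i) + 1)) := by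
    intro N
    rw [Finset.prod_range_add, qPoch]
  exact tendsto_nhds_unique (h2.congr h4) h3

lemma eulerF_at_qpow (hq : ‖q‖ < 1) (n : ℕ) :
    eulerF q (q ^ (n+1)) = qPoch q n / qPochInf q := by
  have h1 := eulerF_mul_pochInf hq (norm_pow_succ_lt hq n)
  have h2 := qPochInf_split hq n
  have h3 := pochInf_ne hq (norm_pow_succ_lt hq n)
  have h4 := qPochInf_ne hq
  field_simp
  rw [h2]
  linear_combination qPoch q n * h1

lemma eulerF_tail (hq : ‖q‖ < 1) {z : ℂ} (hz : ‖z‖ < 1) :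
    ∑' m : ℕ, z ^ (m+1) / qPoch q (m+1) = eulerF q z - 1 := by
  have hsum := eulerF_summable hq hz
  rw [eulerF, Summable.tsum_eq_zero_add hsum]
  simp [qPoch]

theorem stmt13'' (hq : ‖q‖ < 1) :
    ∑' p : ℕ × ℕ, q ^ ((p.1 + 1) * (p.2 + 1)) / (qPoch q (p.1 + 1) * qPoch q (p.2 + 1))
      = 1 / qPochInf q * (∑' n : ℕ, q ^ (n + 1) / (1 - q ^ (n + 1)))
          + ∑' n : ℕ, (1 / qPochInf q - 1 / qPoch q (n + 1)) := by
  obtain ⟨c, hc, hcb⟩ := qPoch_lb q hq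
  set r := ‖q‖ with hr
  have r0 : 0 ≤ r := norm_nonneg q
  have hgeo : Summable (fun n : ℕ => r ^ n) := summable_geometric_of_lt_one r0 hq
  -- summability of the double family
  have hsum2 : Summable (fun p : ℕ × ℕ =>
      q ^ ((p.1 + 1) * (p.2 + 1)) / (qPoch q (p.1 + 1) * qPoch q (p.2 + 1))) := by
    apply Summable.of_norm_bounded (g := fun p : ℕ × ℕ => (c⁻¹ * c⁻¹) * (r ^ p.1 * r ^ p.2))
      (((hgeo.mul_of_nonneg hgeo (fun n => pow_nonneg r0 n) (fun n => pow_nonneg r0 n))).mul_left _)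
    rintro ⟨n, m⟩
    rw [norm_div, norm_pow, norm_mul]
    have h1 : r ^ ((n+1)*(m+1)) ≤ r ^ n * r ^ m := by
      rw [← pow_add]
      apply pow_le_pow_of_le_one r0 hq.le
      nlinarith
    have h2 : (‖qPoch q (n+1)‖ * ‖qPoch q (m+1)‖)⁻¹ ≤ c⁻¹ * c⁻¹ := by
      rw [mul_inv]
      exact mul_le_mul (inv_anti₀ hc (hcb (n+1))) (inv_anti₀ hc (hcb (m+1)))
        (inv_nonneg.2 (norm_nonneg _)) (inv_nonneg.2 (by positivity))
    calc r ^ ((n+1)*(m+1)) / (‖qPoch q (n+1)‖ * ‖qPoch q (m+1)‖)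
        = r ^ ((n+1)*(m+1)) * (‖qPoch q (n+1)‖ * ‖qPoch q (m+1)‖)⁻¹ := by rw [div_eq_mul_inv]
      _ ≤ (r ^ n * r ^ m) * (c⁻¹ * c⁻¹) :=
          mul_le_mul h1 h2 (inv_nonneg.2 (by positivity)) (by positivity)
      _ = (c⁻¹ * c⁻¹) * (r ^ n * r ^ m) := by ring
  -- the inner sums
  have hinner : ∀ n : ℕ,
      ∑' m : ℕ, q ^ ((n + 1) * (m + 1)) / (qPoch q (n + 1) * qPoch q (m + 1))
        = (1 / qPoch q (n+1)) * (eulerF q (q ^ (n+1)) - 1) := by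
    intro n
    have e : ∀ m : ℕ, q ^ ((n + 1) * (m + 1)) / (qPoch q (n + 1) * qPoch q (m + 1))
        = (1 / qPoch q (n+1)) * ((q ^ (n+1)) ^ (m+1) / qPoch q (m+1)) := by
      intro m
      rw [← pow_mul]
      field_simp
    rw [tsum_congr e, tsum_mul_left, eulerF_tail hq (norm_pow_succ_lt hq n)]
  -- closed form of the terms
  have hterm : ∀ n : ℕ, (1 / qPoch q (n+1)) * (eulerF q (q ^ (n+1)) - 1)
      = (1 / qPochInf q) * (q ^ (n+1) / (1 - q ^ (n+1)))
        + (1 / qPochInf q - 1 / qPoch q (n+1)) := by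
    intro n
    rw [eulerF_at_qpow hq n]
    have hp : qPoch q (n+1) = qPoch q n * (1 - q ^ (n+1)) := by
      rw [qPoch, qPoch, Finset.prod_range_succ]
    have h1 : (1:ℂ) - q ^ (n+1) ≠ 0 := one_sub_ne (norm_pow_succ_lt hq n)
    have h4 := qPochInf_ne hq
    have h5 := qPoch_ne hq n
    rw [hp]
    field_simp
    ring
  -- summability of the pieces
  have hA : Summable (fun n : ℕ => q ^ (n+1) / (1 - q ^ (n+1))) := by
    apply Summable.of_norm_bounded (g := fun n : ℕ => (1 - r)⁻¹ * r ^ n) (hgeo.mul_left _)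
    intro n
    rw [norm_div, norm_pow]
    have h1 : r ^ (n+1) ≤ r ^ n := pow_le_pow_of_le_one r0 hq.le (Nat.le_succ n)
    have h2 : 1 - r ≤ ‖1 - q ^ (n+1)‖ := by
      calc 1 - r ≤ 1 - r ^ (n+1) := by
            have : r ^ (n+1) ≤ r := pow_le_of_le_one r0 hq.le (Nat.succ_ne_zero n)
            linarith
        _ = ‖(1:ℂ)‖ - ‖q ^ (n+1)‖ := by rw [norm_pow, norm_one, hr]
        _ ≤ ‖1 - q ^ (n+1)‖ := norm_sub_norm_le _ _
    rw [div_eq_mul_inv, mul_comm]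
    apply mul_le_mul (inv_anti₀ (by linarith) h2) h1 (by positivity) (inv_nonneg.2 (by linarith))
  have hT : Summable (fun n : ℕ =>
      ∑' m : ℕ, q ^ ((n + 1) * (m + 1)) / (qPoch q (n + 1) * qPoch q (m + 1))) := by
    have := hsum2.prod
    exact this
  have hT' : Summable (fun n : ℕ => (1 / qPochInf q) * (q ^ (n+1) / (1 - q ^ (n+1)))
        + (1 / qPochInf q - 1 / qPoch q (n+1))) := by
    apply hT.congr
    intro n
    rw [hinner n, hterm n]
  have hA' : Summable (fun n : ℕ => (1 / qPochInf q) * (q ^ (n+1) / (1 - q ^ (n+1)))) :=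
    hA.mul_left _
  have hB : Summable (fun n : ℕ => (1 / qPochInf q - 1 / qPoch q (n+1))) := by
    have := hT'.sub hA'
    apply this.congr
    intro n
    ring
  -- put it together
  rw [Summable.tsum_prod hsum2]
  rw [tsum_congr (fun n => by rw [hinner n, hterm n])]
  rw [Summable.tsum_add hA' hB, tsum_mul_left]
end main


theorem stmt13 (q : ℂ) (hq : ‖q‖ < 1) :
    ∑' p : ℕ × ℕ, q ^ ((p.1 + 1) * (p.2 + 1)) / (qPoch q (p.1 + 1) * qPoch q (p.2 + 1))
      = 1 / qPochInf q * (∑' n : ℕ, q ^ (n + 1) / (1 - q ^ (n + 1)))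
          + ∑' n : ℕ, (1 / qPochInf q - 1 / qPoch q (n + 1)) :=
  stmt13'' hq
end
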